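/- For any complex number z and real numbers ξ = (λ+γ)/2 and ρ = (γ-λ)/2 with 0 < λ < γ, the inequality ρ·|z| < |1 + ξ·z| holds if and only if z lies strictly outside the closed disk in the complex plane whose diameter is the real segment from -1/λ to -1/γ. -/

import Mathlib

open Complex

/-- Circle criterion, case `0 < λ < γ`: with ξ = (λ+γ)/2, ρ = (γ-λ)/2,
`ρ|z| < |1 + ξ z|` iff `z` lies strictly outside the closed disk `D[-1/λ, -1/γ]`,
whose center is `c = (-1/λ - 1/γ)/2` and radius `r = (1/λ - 1/γ)/2`. -/
theorem stmt0 (z : ℂ) (lam gam : ℝ) (hlam : 0 < lam) (hgam : lam < gam)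
    (ξ ρ : ℝ) (hξ : ξ = (lam + gam) / 2) (hρ : ρ = (gam - lam) / 2)
    (c r : ℝ) (hc : c = (-1 / lam - 1 / gam) / 2) (hr : r = (1 / lam - 1 / gam) / 2) :
    ρ * ‖z‖ < ‖1 + (ξ : ℂ) * z‖ ↔
      r < ‖z - (c : ℂ)‖ := by
  have hg : 0 < gam := hlam.trans hgam
  have hρ0 : 0 ≤ ρ * ‖z‖ :=
    mul_nonneg (by rw [hρ]; linarith) (norm_nonneg _)
  have hr0 : 0 ≤ r := by
    have : 1 / gam ≤ 1 / lam := one_div_le_one_div_of_le hlam hgam.le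
    rw [hr]; linarith
  rw [← pow_lt_pow_iff_left₀ hρ0 (norm_nonneg _) two_ne_zero,
      ← pow_lt_pow_iff_left₀ hr0 (norm_nonneg _) two_ne_zero,
      mul_pow]
  simp only [Complex.sq_norm, Complex.normSq_apply]
  have hcl : lam * gam * c = -ξ := by
    rw [hc, hξ]; field_simp; ring
  have hcr : lam * gam * (c^2 - r^2) = 1 := by
    rw [hc, hr]; field_simp; ring
  have hξρ : ξ^2 - ρ^2 = lam * gam := by rw [hξ, hρ]; ring
  have hlg : 0 < lam * gam := mul_pos hlam hg
  simp only [Complex.add_re, Complex.add_im, Complex.sub_re, Complex.sub_im,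
    Complex.mul_re, Complex.mul_im, Complex.one_re, Complex.one_im,
    Complex.ofReal_re, Complex.ofReal_im]
  have key : lam * gam * ((z.re - c) * (z.re - c) + (z.im - 0) * (z.im - 0) - r ^ 2)
      = (1 + (ξ * z.re - 0 * z.im)) * (1 + (ξ * z.re - 0 * z.im)) +
        (0 + (ξ * z.im + 0 * z.re)) * (0 + (ξ * z.im + 0 * z.re))
        - ρ ^ 2 * (z.re * z.re + z.im * z.im) := by
    linear_combination (-(z.re * z.re) - z.im * z.im) * hξρ - 2 * z.re * hcl + hcr
  constructor
  · intro h
    nlinarith [key, hlg]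
  · intro h
    nlinarith [key, hlg]
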